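/- Let N and N_r be integers with 2 ≤ N ≤ N_r, set n = N·N_r, and for N ≤ k ≤ (N−1)·N_r + 1 define G_{n,k}(u) = ∑_{i=0}^{k−1} [n!·C(k−1,i)·(−1)^i / ((n−k+i+1)·(n−k)!·(k−1)!)] · u^{n−k+i+1}. Let p_N, …, p_{(N−1)N_r+1} be nonnegative reals summing to 1 with p_{(N−1)N_r+1} = (N_r − 1)! / ∏_{l=1}^{N_r−1} (N·N_r − l). Then lim_{u→0⁺} [∑_{k=N}^{(N−1)N_r+1} p_k · G_{n,k}(u)] / u^{N_r} = N. -/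

import Mathlib

/-- `G n k u = ∑_{i=0}^{k−1} n!·C(k−1,i)·(−1)^i / ((n−k+i+1)(n−k)!(k−1)!) · u^{n−k+i+1}`,
the CDF of the `k`-th largest of `n` i.i.d. random variables expressed as a
polynomial in the common per-entry CDF value `u`. -/
noncomputable def orderCDF (n k : ℕ) (u : ℝ) : ℝ :=
  ∑ i ∈ Finset.range k,
    ((n.factorial : ℝ) * (((k - 1).choose i : ℝ)) * (-1 : ℝ) ^ i
        / (((n : ℝ) - (k : ℝ) + (i : ℝ) + 1) * ((n - k).factorial : ℝ)
            * ((k - 1).factorial : ℝ)))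
      * u ^ (n - k + i + 1)

lemma prod_sub_mul_factorial (n : ℕ) :
    ∀ j, j + 1 ≤ n →
      (∏ l ∈ Finset.Icc 1 j, (n - l)) * (n - 1 - j).factorial = (n - 1).factorial := by
  intro j
  induction j with
  | zero => simp
  | succ j ih =>
    intro h
    rw [Finset.prod_Icc_succ_top (by omega)]
    have e1 : n - (j + 1) = n - 1 - j := by omega
    have e2 : n - 1 - (j + 1) = (n - 1 - j) - 1 := by omega
    rw [e1, e2, mul_assoc, Nat.mul_factorial_pred (by omega), ih (by omega)]

/-- Array gain of ORS: for `2 ≤ N ≤ Nr`, `n = N·Nr`, nonnegative reals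
`p_N, …, p_{(N−1)Nr+1}` summing to `1` with
`p_{(N−1)Nr+1} = (Nr−1)! / ∏_{l=1}^{Nr−1} (N·Nr − l)`,
`lim_{u→0⁺} (∑ₖ p_k · G_{n,k}(u)) / u^{Nr} = N`. -/
theorem ORS_array_gain (N Nr : ℕ) (hN : 2 ≤ N) (hNr : N ≤ Nr)
    (p : ℕ → ℝ) (hp0 : ∀ k ∈ Finset.Icc N ((N - 1) * Nr + 1), 0 ≤ p k)
    (hp1 : ∑ k ∈ Finset.Icc N ((N - 1) * Nr + 1), p k = 1)
    (hptop : p ((N - 1) * Nr + 1)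
      = ((Nr - 1).factorial : ℝ)
        / ∏ l ∈ Finset.Icc 1 (Nr - 1), ((N : ℝ) * (Nr : ℝ) - (l : ℝ))) :
    Filter.Tendsto
      (fun u : ℝ =>
        (∑ k ∈ Finset.Icc N ((N - 1) * Nr + 1), p k * orderCDF (N * Nr) k u) / u ^ Nr)
      (nhdsWithin 0 (Set.Ioi 0)) (nhds (N : ℝ)) := by
  have hNr2 : 2 ≤ Nr := le_trans hN hNr
  have hmn : (N - 1) * Nr + Nr = N * Nr := by
    cases N with
    | zero => omega
    | succ t => simp [Nat.succ_sub_one, Nat.succ_mul]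
  have hNm : N - 1 ≤ (N - 1) * Nr := Nat.le_mul_of_pos_right _ (by omega)
  -- make the nonlinear terms opaque
  generalize hm : (N - 1) * Nr = m at *
  generalize hn : N * Nr = n at *
  -- real-cast facts
  have hcastn : (n : ℝ) = (N : ℝ) * (Nr : ℝ) := by exact_mod_cast hn.symm
  -- the polynomial version of the quotient
  set g : ℝ → ℝ := fun u => ∑ k ∈ Finset.Icc N (m + 1), p k *
    ∑ i ∈ Finset.range k,
      ((n.factorial : ℝ) * (((k - 1).choose i : ℝ)) * (-1 : ℝ) ^ i
          / (((n : ℝ) - (k : ℝ) + (i : ℝ) + 1) * ((n - k).factorial : ℝ)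
              * ((k - 1).factorial : ℝ)))
        * u ^ (n - k + i + 1 - Nr) with hg
  have hgcont : Continuous g := by
    apply continuous_finset_sum
    intro k _
    exact continuous_const.mul (continuous_finset_sum _ fun i _ =>
      continuous_const.mul (continuous_pow _))
  have heq : ∀ u ∈ Set.Ioi (0 : ℝ),
      g u = (∑ k ∈ Finset.Icc N (m + 1), p k * orderCDF n k u) / u ^ Nr := by
    intro u hu
    have hu0 : u ≠ 0 := ne_of_gt hu
    rw [Finset.sum_div]
    refine Finset.sum_congr rfl fun k hk => ?_
    have hk2 : k ≤ m + 1 := (Finset.mem_Icc.mp hk).2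
    rw [mul_div_assoc, orderCDF, Finset.sum_div]
    congr 1
    refine Finset.sum_congr rfl fun i hi => ?_
    rw [pow_sub₀ u hu0 (show Nr ≤ n - k + i + 1 by omega)]
    ring
  -- value of g at 0
  have hg0 : g 0 = (N : ℝ) := by
    simp only [hg]
    rw [Finset.sum_eq_single (m + 1)]
    · rw [Finset.sum_eq_single 0]
      · have e0 : n - (m + 1) + 0 + 1 - Nr = 0 := by omega
        have e1 : n - (m + 1) = Nr - 1 := by omega
        have e2 : m + 1 - 1 = m := by omega
        rw [e0, pow_zero, mul_one, e1, e2, hptop]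
        simp only [Nat.choose_zero_right, pow_zero, Nat.cast_one, mul_one]
        -- product as a natural number
        have hpc : ∏ l ∈ Finset.Icc 1 (Nr - 1), ((N : ℝ) * (Nr : ℝ) - (l : ℝ))
            = ((∏ l ∈ Finset.Icc 1 (Nr - 1), (n - l) : ℕ) : ℝ) := by
          rw [Nat.cast_prod]
          refine Finset.prod_congr rfl fun l hl => ?_
          have hl2 : l ≤ Nr - 1 := (Finset.mem_Icc.mp hl).2
          rw [Nat.cast_sub (by omega), hcastn]
        rw [hpc]
        have hPf : ((∏ l ∈ Finset.Icc 1 (Nr - 1), (n - l) : ℕ) : ℝ)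
            * ((n - Nr).factorial : ℝ) = ((n - 1).factorial : ℝ) := by
          have := prod_sub_mul_factorial n (Nr - 1) (by omega)
          have e3 : n - 1 - (Nr - 1) = n - Nr := by omega
          rw [e3] at this
          exact_mod_cast congrArg (Nat.cast : ℕ → ℝ) this
        have hfac : (n.factorial : ℝ) = (N : ℝ) * (Nr : ℝ) * ((n - 1).factorial : ℝ) := by
          rw [← hcastn]
          exact_mod_cast (Nat.mul_factorial_pred (by omega)).symm
        have em : m = n - Nr := by omega
        have ecast : (n : ℝ) - ((m + 1 : ℕ) : ℝ) + ((0 : ℕ) : ℝ) + 1 = (Nr : ℝ) := by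
          have : (m : ℝ) + (Nr : ℝ) = (n : ℝ) := by exact_mod_cast hmn
          push_cast
          linarith
        rw [ecast, em, hfac]
        have hP0 : ((∏ l ∈ Finset.Icc 1 (Nr - 1), (n - l) : ℕ) : ℝ) ≠ 0 := by
          have : 0 < ∏ l ∈ Finset.Icc 1 (Nr - 1), (n - l) := by
            apply Finset.prod_pos
            intro l hl
            have := (Finset.mem_Icc.mp hl).2
            omega
          positivity
        have hNr0 : (Nr : ℝ) ≠ 0 := by positivity
        have hf1 : ((Nr - 1).factorial : ℝ) ≠ 0 := by positivity
        have hf2 : ((n - Nr).factorial : ℝ) ≠ 0 := by positivity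
        rw [div_mul_div_comm, div_eq_iff (by
          exact mul_ne_zero hP0 (mul_ne_zero (mul_ne_zero hNr0 hf1) hf2))]
        linear_combination (-((N : ℝ) * (Nr : ℝ) * ((Nr - 1).factorial : ℝ))) * hPf
      · intro i hi hi0
        have : n - (m + 1) + i + 1 - Nr ≠ 0 := by omega
        rw [zero_pow this, mul_zero]
      · intro h
        exact absurd (Finset.mem_range.mpr (by omega)) h
    · intro k hk hkne
      have hk2 : k ≤ m + 1 := (Finset.mem_Icc.mp hk).2
      have hk3 : k < m + 1 := lt_of_le_of_ne hk2 hkne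
      rw [Finset.sum_eq_zero, mul_zero]
      intro i hi
      have : n - k + i + 1 - Nr ≠ 0 := by omega
      rw [zero_pow this, mul_zero]
    · intro h
      exact absurd (Finset.mem_Icc.mpr ⟨by omega, le_refl _⟩) h
  have : Filter.Tendsto g (nhdsWithin 0 (Set.Ioi 0)) (nhds ((N : ℝ))) := by
    rw [← hg0]
    exact (hgcont.tendsto 0).mono_left nhdsWithin_le_nhds
  refine this.congr' ?_
  filter_upwards [self_mem_nhdsWithin] with u hu using heq u hu
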